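/- Let k ≥ 1 and 0 ≤ i ≤ k be integers. Define Q̃_{k,i}(t) = (1/2)·C(2k,2i)·(1+t)^{2k−2i} + (1/2)·Σ_{j=i}^{k} C(2k,2j)·(1−t)^{2k−2j}·C(j,i)·(−4t)^{j−i}. Then Q̃_{k,i}(t) ≥ 0 for all real t. -/

import Mathlib

/-- The polynomial `Q̃_{k,i}(t)` : the `ρ* = 0` variant of `Q_{k,i}`. -/
noncomputable def Qtilde (k i : ℕ) (t : ℝ) : ℝ :=
  (1/2) * ((2*k).choose (2*i) : ℝ) * (1+t)^(2*k-2*i)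
    + (1/2) * ∑ j ∈ Finset.Icc i k,
        ((2*k).choose (2*j) : ℝ) * (1-t)^(2*k-2*j) * (j.choose i : ℝ) * (-4*t)^(j-i)

namespace Stmt10

open Finset Polynomial

/-- the angles (2m+1)π/(2k) -/
noncomputable def th (k m : ℕ) : ℝ := (2*m+1) * Real.pi / (2*k)

lemma th_pos (k m : ℕ) (hk : 1 ≤ k) : 0 < th k m := by
  apply div_pos
  · positivity
  · positivity

lemma th_lt_pi (k m : ℕ) (hk : 1 ≤ k) (hm : m < k) : th k m < Real.pi := by
  rw [th, div_lt_iff₀ (by positivity)]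
  have hpi := Real.pi_pos
  have : (2*(m:ℝ)+1) < 2*k := by
    have : (m:ℝ) + 1 ≤ k := by exact_mod_cast hm
    linarith
  nlinarith

lemma cos_th_lt_one (k m : ℕ) (hk : 1 ≤ k) (hm : m < k) : Real.cos (th k m) < 1 := by
  have h1 := th_pos k m hk
  have h2 := th_lt_pi k m hk hm
  calc Real.cos (th k m) < Real.cos 0 := by
        apply Real.cos_lt_cos_of_nonneg_of_le_pi le_rfl (le_of_lt h2) h1
    _ = 1 := Real.cos_zero

lemma neg_one_lt_cos_th (k m : ℕ) (hk : 1 ≤ k) (hm : m < k) : -1 < Real.cos (th k m) := by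
  have h1 := th_pos k m hk
  have h2 := th_lt_pi k m hk hm
  calc (-1:ℝ) = Real.cos Real.pi := (Real.cos_pi).symm
    _ < Real.cos (th k m) := Real.cos_lt_cos_of_nonneg_of_le_pi (le_of_lt h1) le_rfl h2

lemma one_sub_cos_sq_pos (k m : ℕ) (hk : 1 ≤ k) (hm : m < k) :
    0 < 1 - Real.cos (th k m)^2 := by
  have h1 := cos_th_lt_one k m hk hm
  have h2 := neg_one_lt_cos_th k m hk hm
  nlinarith


/-! ### Roots of unity factorizations over ℂ -/

lemma prod_odd_roots (k : ℕ) (hk : 1 ≤ k) (y : ℂ) :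
    y^(2*k) + 1 = ∏ m ∈ range (2*k),
      (y - Complex.exp (Real.pi * Complex.I / (2*k)) ^ (2*m+1)) := by
  set α : ℂ := Complex.exp (Real.pi * Complex.I / (2*k)) with hα
  have h2k : (2*k) ≠ 0 := by omega
  have h2kC : ((2*k : ℕ) : ℂ) ≠ 0 := by exact_mod_cast h2k
  have hζ : IsPrimitiveRoot (α^2) (2*k) := by
    have h := Complex.isPrimitiveRoot_exp (2*k) h2k
    have heq : α^2 = Complex.exp (2 * Real.pi * Complex.I / ((2*k : ℕ) : ℂ)) := by
      rw [hα, ← Complex.exp_nat_mul]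
      congr 1
      push_cast
      ring
    rwa [← heq] at h
  have he : α^(2*k) = -1 := by
    rw [hα, ← Complex.exp_nat_mul]
    rw [show ((2*k : ℕ) : ℂ) * (Real.pi * Complex.I / (2*k)) = Real.pi * Complex.I by
      have hkC : (k:ℂ) ≠ 0 := Nat.cast_ne_zero.mpr (by omega)
      push_cast
      field_simp]
    exact Complex.exp_pi_mul_I
  have hpoly := X_pow_sub_C_eq_prod hζ (Nat.pos_of_ne_zero h2k) he
  have hev := congrArg (Polynomial.eval y) hpoly
  simp only [Polynomial.eval_sub, Polynomial.eval_pow, Polynomial.eval_X, Polynomial.eval_C,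
    Polynomial.eval_prod, Polynomial.eval_mul] at hev
  calc y^(2*k) + 1 = y^(2*k) - (-1) := by ring
    _ = ∏ m ∈ range (2*k), (y - (α^2)^m * α) := hev
    _ = ∏ m ∈ range (2*k), (y - α^(2*m+1)) := by
        apply Finset.prod_congr rfl
        intro m _
        rw [← pow_mul, ← pow_succ]

lemma prod_lin (k : ℕ) (hk : 1 ≤ k) (a b : ℂ) :
    a^(2*k) + b^(2*k) = ∏ m ∈ range (2*k),
      (a - Complex.exp (Real.pi * Complex.I / (2*k)) ^ (2*m+1) * b) := by
  rcases eq_or_ne b 0 with rfl | hb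
  · have h2k : (2*k) ≠ 0 := by omega
    simp [zero_pow h2k, Finset.prod_const, Finset.card_range]
  · have h := prod_odd_roots k hk (a/b)
    have hb2 : b^(2*k) ≠ 0 := pow_ne_zero _ hb
    have hkey : ((a/b)^(2*k) + 1) * b^(2*k) = a^(2*k) + b^(2*k) := by
      rw [add_mul, div_pow, div_mul_cancel₀ _ hb2, one_mul]
    rw [← hkey, h,
      show b^(2*k) = ∏ _m ∈ range (2*k), b by rw [Finset.prod_const, Finset.card_range],
      ← Finset.prod_mul_distrib]
    apply Finset.prod_congr rfl
    intro m _
    field_simp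

lemma pair_factor (k : ℕ) (hk : 1 ≤ k) (z : ℂ) :
    (1+z)^(2*k) + (1-z)^(2*k)
      = ∏ m ∈ range k, (2*(1+z^2) - 2*(Real.cos (th k m) : ℂ)*(1-z^2)) := by
  set α : ℂ := Complex.exp (Real.pi * Complex.I / (2*k)) with hα
  have h2k : (2*k) ≠ 0 := by omega
  have h2kC : ((2*k : ℕ) : ℂ) ≠ 0 := by exact_mod_cast h2k
  have hα2k : α^(2*k) = -1 := by
    rw [hα, ← Complex.exp_nat_mul]
    rw [show ((2*k : ℕ) : ℂ) * (Real.pi * Complex.I / (2*k)) = Real.pi * Complex.I by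
      have hkC : (k:ℂ) ≠ 0 := Nat.cast_ne_zero.mpr (by omega)
      push_cast
      field_simp]
    exact Complex.exp_pi_mul_I
  rw [prod_lin k hk (1+z) (1-z)]
  rw [show 2*k = k + k from by ring, Finset.prod_range_add,
    ← Finset.prod_range_reflect (fun m => (1+z) - α^(2*(k+m)+1) * (1-z)) k,
    ← Finset.prod_mul_distrib]
  apply Finset.prod_congr rfl
  intro m hm
  have hmk : m < k := mem_range.mp hm
  rw [show 2*(k+(k-1-m))+1 = 4*k-(2*m+1) from by omega]
  have hpow : α ^ (4*k - (2*m+1)) * α^(2*m+1) = 1 := by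
    rw [← pow_add, show 4*k - (2*m+1) + (2*m+1) = (2*k)*2 from by omega, pow_mul, hα2k]
    norm_num
  have hβ : α^(2*m+1) = Complex.exp ((th k m : ℝ) * Complex.I) := by
    rw [hα, ← Complex.exp_nat_mul]
    congr 1
    rw [th]
    push_cast
    field_simp
  have hsum : α^(2*m+1) + α^(4*k-(2*m+1)) = 2*(Real.cos (th k m) : ℂ) := by
    have hinv : α^(4*k-(2*m+1)) = (α^(2*m+1))⁻¹ := eq_inv_of_mul_eq_one_left hpow
    rw [hβ] at hinv ⊢
    rw [hinv, ← Complex.exp_neg, Complex.ofReal_cos, Complex.two_cos]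
    ring_nf
  linear_combination (-((1+z)*(1-z)))*hsum + (1-z)^2*hpow

/-! ### Even binomial expansion -/

lemma sum_range_even (n : ℕ) (F : ℕ → ℂ) (h0 : ∀ p, ¬ Even p → F p = 0) :
    ∑ p ∈ range (2*n+1), F p = ∑ j ∈ range (n+1), F (2*j) := by
  induction n with
  | zero => simp
  | succ n ih =>
      have h1 : 2*(n+1)+1 = ((2*n+1)+1)+1 := by omega
      rw [h1, Finset.sum_range_succ, Finset.sum_range_succ, ih,
        Finset.sum_range_succ (fun j => F (2*j)) (n+1)]
      have hz : F (2*n+1) = 0 := h0 _ (by simp [Nat.even_add_one, parity_simps])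
      have h2 : (2*n+1)+1 = 2*(n+1) := by omega
      rw [hz, h2]
      ring

lemma even_binom (n : ℕ) (a b : ℂ) :
    (a+b)^(2*n) + (a-b)^(2*n)
      = 2 * ∑ j ∈ range (n+1), ((2*n).choose (2*j) : ℂ) * a^(2*n-2*j) * b^(2*j) := by
  have h1 : (a+b)^(2*n) = ∑ p ∈ range (2*n+1), b^p * a^(2*n-p) * ((2*n).choose p : ℂ) := by
    rw [add_comm a b, add_pow]
  have h2 : (a-b)^(2*n)
      = ∑ p ∈ range (2*n+1), (-1:ℂ)^p * (b^p * a^(2*n-p) * ((2*n).choose p : ℂ)) := by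
    rw [show a - b = -b + a by ring, add_pow]
    apply Finset.sum_congr rfl
    intro p _
    rw [neg_pow]
    ring
  rw [h1, h2, ← Finset.sum_add_distrib]
  have h3 : ∑ p ∈ range (2*n+1),
      (b^p * a^(2*n-p) * ((2*n).choose p : ℂ)
        + (-1:ℂ)^p * (b^p * a^(2*n-p) * ((2*n).choose p : ℂ)))
      = ∑ p ∈ range (2*n+1), (1 + (-1:ℂ)^p) * (b^p * a^(2*n-p) * ((2*n).choose p : ℂ)) := by
    apply Finset.sum_congr rfl
    intro p _
    ring
  rw [h3, sum_range_even n _ (fun p hp => by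
    rw [(Nat.not_even_iff_odd.mp hp).neg_one_pow]
    ring), Finset.mul_sum]
  apply Finset.sum_congr rfl
  intro j _
  rw [(even_two_mul j).neg_one_pow]
  ring

/-! ### triangular sum swap -/

lemma step_a (k : ℕ) (T : ℕ → ℕ → ℂ) :
    ∑ i ∈ range (k+1), ∑ j ∈ Icc i k, T i j
      = ∑ j ∈ range (k+1), ∑ i ∈ range (j+1), T i j := by
  have h1 : ∀ i, Icc i k = (range (k+1)).filter (fun j => i ≤ j) := by
    intro i
    ext j
    simp only [mem_Icc, mem_filter, mem_range, Nat.lt_succ_iff]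
    omega
  calc ∑ i ∈ range (k+1), ∑ j ∈ Icc i k, T i j
      = ∑ i ∈ range (k+1), ∑ j ∈ range (k+1), if i ≤ j then T i j else 0 := by
        apply Finset.sum_congr rfl
        intro i _
        rw [h1 i, Finset.sum_filter]
    _ = ∑ j ∈ range (k+1), ∑ i ∈ range (k+1), if i ≤ j then T i j else 0 :=
        Finset.sum_comm
    _ = ∑ j ∈ range (k+1), ∑ i ∈ range (j+1), T i j := by
        apply Finset.sum_congr rfl
        intro j hj
        rw [← Finset.sum_filter]
        apply Finset.sum_congr
        · ext i
          simp only [mem_filter, mem_range, Nat.lt_succ_iff]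
          have := mem_range.mp hj
          omega
        · intros; rfl

/-- The key factorization identity, over ℂ, with `t = s²`. -/
lemma keyC (k : ℕ) (hk : 1 ≤ k) (s x : ℂ) (hs : s ≠ 0) :
    ∑ i ∈ range (k+1),
        ((1/2) * ((2*k).choose (2*i) : ℂ) * (1+s^2)^(2*k-2*i)
          + (1/2) * ∑ j ∈ Icc i k,
              ((2*k).choose (2*j) : ℂ) * (1-s^2)^(2*k-2*j) * (j.choose i : ℂ)
                * (-4*s^2)^(j-i)) * x^i
      = 4^(k-1) * ∏ m ∈ range k,
          ((1 - (Real.cos (th k m) : ℂ)^2) * x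
            + ((1 - (Real.cos (th k m) : ℂ)) - s^2*(1 + (Real.cos (th k m) : ℂ)))^2) := by
  obtain ⟨c, hc⟩ := IsAlgClosed.exists_pow_nat_eq (x / s^2) (n := 2) (by norm_num)
  obtain ⟨d, hd⟩ := IsAlgClosed.exists_pow_nat_eq (c^2 - 4) (n := 2) (by norm_num)
  set u : ℂ := (c+d)/2 with hu
  have hone : u * ((c-d)/2) = 1 := by
    rw [hu]
    linear_combination (-(1:ℂ)/4) * hd
  have hu0 : u ≠ 0 := left_ne_zero_of_mul_eq_one hone
  have hinv : u⁻¹ = (c-d)/2 := inv_eq_of_mul_eq_one_right hone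
  have hv : u + u⁻¹ = c := by rw [hinv, hu]; ring
  have hsc : (s*c)^2 = x := by
    rw [mul_pow, hc]
    field_simp
  have hsc' : s^2*c^2 = x := by rw [← mul_pow]; exact hsc
  have hsd : (s*d)^2 = x - 4*s^2 := by
    rw [mul_pow, hd]
    linear_combination hsc'
  -- Step A : reorganize the sum
  have stepA : ∑ i ∈ range (k+1),
        ((1/2) * ((2*k).choose (2*i) : ℂ) * (1+s^2)^(2*k-2*i)
          + (1/2) * ∑ j ∈ Icc i k,
              ((2*k).choose (2*j) : ℂ) * (1-s^2)^(2*k-2*j) * (j.choose i : ℂ)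
                * (-4*s^2)^(j-i)) * x^i
      = (1/2) * ∑ j ∈ range (k+1), ((2*k).choose (2*j) : ℂ) * (1+s^2)^(2*k-2*j) * x^j
        + (1/2) * ∑ j ∈ range (k+1),
            ((2*k).choose (2*j) : ℂ) * (1-s^2)^(2*k-2*j) * (x - 4*s^2)^j := by
    have e1 : ∀ i ∈ range (k+1),
        ((1/2) * ((2*k).choose (2*i) : ℂ) * (1+s^2)^(2*k-2*i)
          + (1/2) * ∑ j ∈ Icc i k,
              ((2*k).choose (2*j) : ℂ) * (1-s^2)^(2*k-2*j) * (j.choose i : ℂ)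
                * (-4*s^2)^(j-i)) * x^i
        = (1/2) * ((2*k).choose (2*i) : ℂ) * (1+s^2)^(2*k-2*i) * x^i
          + ∑ j ∈ Icc i k,
              (1/2) * (((2*k).choose (2*j) : ℂ) * (1-s^2)^(2*k-2*j)
                * ((j.choose i : ℂ) * x^i * (-4*s^2)^(j-i))) := by
      intro i _
      rw [add_mul, Finset.mul_sum, Finset.sum_mul]
      congr 1
      apply Finset.sum_congr rfl
      intro j _
      ring
    rw [Finset.sum_congr rfl e1, Finset.sum_add_distrib]
    congr 1
    · rw [Finset.mul_sum]
      apply Finset.sum_congr rfl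
      intro i _
      ring
    · rw [step_a k (fun i j => (1/2) * (((2*k).choose (2*j) : ℂ) * (1-s^2)^(2*k-2*j)
        * ((j.choose i : ℂ) * x^i * (-4*s^2)^(j-i)))), Finset.mul_sum]
      apply Finset.sum_congr rfl
      intro j _
      rw [show x - 4*s^2 = x + (-4*s^2) from by ring, add_pow, Finset.mul_sum, Finset.mul_sum]
      apply Finset.sum_congr rfl
      intro i _
      ring
  rw [stepA]
  -- Step B : even binomial in reverse
  have hb1 : ∀ j, x^j = (s*c)^(2*j) := by
    intro j
    rw [pow_mul, hsc]
  have hb2 : ∀ j, (x - 4*s^2)^j = (s*d)^(2*j) := by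
    intro j
    rw [pow_mul, hsd]
  have eb1 := even_binom k (1+s^2) (s*c)
  have eb2 := even_binom k (1-s^2) (s*d)
  have hS : (1/2) * ∑ j ∈ range (k+1), ((2*k).choose (2*j) : ℂ) * (1+s^2)^(2*k-2*j) * x^j
        + (1/2) * ∑ j ∈ range (k+1),
            ((2*k).choose (2*j) : ℂ) * (1-s^2)^(2*k-2*j) * (x - 4*s^2)^j
      = (1/4) * (((1+s^2)+(s*c))^(2*k) + ((1+s^2)-(s*c))^(2*k))
        + (1/4) * (((1-s^2)+(s*d))^(2*k) + ((1-s^2)-(s*d))^(2*k)) := by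
    rw [eb1, eb2]
    simp only [hb1, hb2]
    ring
  rw [hS]
  -- factor the four terms
  have hf1 : (1+s^2)+(s*c) = (1+s*u)*(1+s*u⁻¹) := by
    rw [← hv]
    field_simp
    ring
  have hf2 : (1+s^2)-(s*c) = (1-s*u)*(1-s*u⁻¹) := by
    rw [← hv]
    field_simp
    ring
  have hf3 : (1-s^2)+(s*d) = (1+s*u)*(1-s*u⁻¹) := by
    rw [show d = u - u⁻¹ from by rw [hinv, hu]; ring]
    field_simp
    ring
  have hf4 : (1-s^2)-(s*d) = (1-s*u)*(1+s*u⁻¹) := by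
    rw [show d = u - u⁻¹ from by rw [hinv, hu]; ring]
    field_simp
    ring
  rw [hf1, hf2, hf3, hf4]
  have hgroup : (1/4 : ℂ) * (((1+s*u)*(1+s*u⁻¹))^(2*k) + ((1-s*u)*(1-s*u⁻¹))^(2*k))
        + (1/4) * (((1+s*u)*(1-s*u⁻¹))^(2*k) + ((1-s*u)*(1+s*u⁻¹))^(2*k))
      = (1/4) * (((1+(s*u))^(2*k) + (1-(s*u))^(2*k))
          * ((1+(s*u⁻¹))^(2*k) + (1-(s*u⁻¹))^(2*k))) := by
    simp only [mul_pow]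
    ring
  rw [hgroup, pair_factor k hk (s*u), pair_factor k hk (s*u⁻¹), ← Finset.prod_mul_distrib]
  -- merge constants and per-factor products
  have hxv : s^2*(u+u⁻¹)^2 = x := by rw [hv]; exact hsc'
  have hfinal : ∀ m ∈ range k,
      (2*(1+(s*u)^2) - 2*(Real.cos (th k m) : ℂ)*(1-(s*u)^2))
        * (2*(1+(s*u⁻¹)^2) - 2*(Real.cos (th k m) : ℂ)*(1-(s*u⁻¹)^2))
      = 4 * ((1 - (Real.cos (th k m) : ℂ)^2) * x
            + ((1 - (Real.cos (th k m) : ℂ)) - s^2*(1 + (Real.cos (th k m) : ℂ)))^2) := by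
    intro m _
    rw [← hxv]
    field_simp
    ring
  rw [Finset.prod_congr rfl hfinal, Finset.prod_mul_distrib, Finset.prod_const,
    Finset.card_range]
  have hc4 : (4:ℂ)^k = 4 * 4^(k-1) := by
    conv_lhs => rw [show k = (k-1)+1 from by omega]
    rw [pow_succ]
    ring
  rw [hc4]
  ring

/-- The key factorization identity, over ℝ. -/
lemma key (k : ℕ) (hk : 1 ≤ k) (t x : ℝ) (ht : t ≠ 0) :
    ∑ i ∈ range (k+1), Qtilde k i t * x^i
      = 4^(k-1) * ∏ m ∈ range k,
          ((1 - Real.cos (th k m)^2) * x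
            + ((1 - Real.cos (th k m)) - t*(1 + Real.cos (th k m)))^2) := by
  obtain ⟨sc, hsc⟩ := IsAlgClosed.exists_pow_nat_eq ((t:ℂ)) (n := 2) (by norm_num)
  have hs0 : sc ≠ 0 := by
    intro h
    rw [h] at hsc
    simp only [ne_eq] at ht
    apply ht
    have : ((t:ℂ)) = 0 := by rw [← hsc]; ring
    exact_mod_cast this
  have H := keyC k hk sc (x:ℂ) hs0
  rw [hsc] at H
  apply Complex.ofReal_injective
  push_cast [Qtilde]
  simp only [← Complex.ofReal_cos]
  exact H

theorem main (k i : ℕ) (hk : 1 ≤ k) (hik : i ≤ k) (t : ℝ) :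
    0 ≤ Qtilde k i t := by
  rcases eq_or_ne t 0 with rfl | ht
  · -- t = 0 : direct
    rw [Qtilde]
    have h1 : (0:ℝ) ≤ (1/2) * ((2*k).choose (2*i) : ℝ) * (1+0)^(2*k-2*i) := by positivity
    have h2 : (0:ℝ) ≤ ∑ j ∈ Finset.Icc i k,
        ((2*k).choose (2*j) : ℝ) * (1-0)^(2*k-2*j) * (j.choose i : ℝ) * (-4*0)^(j-i) := by
      apply Finset.sum_nonneg
      intro j hj
      have : (-4*(0:ℝ))^(j-i) = 0^(j-i) := by norm_num
      rw [this]
      positivity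
    exact add_nonneg h1 (mul_nonneg (by norm_num) h2)
  · -- t ≠ 0 : use key factorization
    set a : ℕ → ℝ := fun m => 1 - Real.cos (th k m)^2 with ha
    set b : ℕ → ℝ := fun m => ((1 - Real.cos (th k m)) - t*(1 + Real.cos (th k m)))^2 with hb
    have hapos : ∀ m ∈ range k, 0 < a m := fun m hm =>
      one_sub_cos_sq_pos k m hk (mem_range.mp hm)
    have hbnn : ∀ m, 0 ≤ b m := fun m => sq_nonneg _
    set r : ℕ → ℝ := fun m => b m / a m with hr
    have hrnn : ∀ m ∈ range k, 0 ≤ r m := fun m hm =>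
      div_nonneg (hbnn m) (le_of_lt (hapos m hm))
    set K : ℝ := 4^(k-1) * ∏ m ∈ range k, a m with hK
    have hKpos : 0 < K := by
      apply mul_pos (by positivity)
      exact Finset.prod_pos hapos
    -- polynomial identity
    set P₁ : ℝ[X] := ∑ i ∈ range (k+1), C (Qtilde k i t) * X^i with hP₁
    set P₂ : ℝ[X] := C K * ∏ m ∈ range k, (X + C (r m)) with hP₂
    have hfun : ∀ x : ℝ, P₁.eval x = P₂.eval x := by
      intro x
      have h2 : P₂.eval x = 4^(k-1) * ∏ m ∈ range k, (a m * x + b m) := by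
        simp only [hP₂, eval_mul, eval_C, eval_prod, eval_add, eval_X, hK]
        rw [mul_assoc, ← Finset.prod_mul_distrib]
        congr 1
        apply Finset.prod_congr rfl
        intro m hm
        simp only [hr]
        field_simp [ne_of_gt (hapos m hm)]
      have h1 : P₁.eval x = ∑ i ∈ range (k+1), Qtilde k i t * x^i := by
        rw [hP₁, eval_finset_sum]
        simp
      rw [h1, h2, key k hk t x ht]
    have hPeq : P₁ = P₂ := Polynomial.funext hfun
    have hcoeff1 : P₁.coeff i = Qtilde k i t := by
      rw [hP₁, finset_sum_coeff]
      rw [Finset.sum_eq_single i]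
      · simp
      · intro j _ hji
        simp [coeff_C_mul, coeff_X_pow, Ne.symm hji]
      · intro h
        exact absurd (mem_range.mpr (Nat.lt_succ_of_le hik)) h
    have hcoeff2 : P₂.coeff i =
        K * ∑ s ∈ (range k).powersetCard (k - i), ∏ m ∈ s, r m := by
      rw [hP₂, coeff_C_mul]
      congr 1
      rw [Finset.prod_X_add_C_coeff]
      · rw [card_range]
      · rw [card_range]; exact hik
    rw [← hcoeff1, hPeq, hcoeff2]
    apply mul_nonneg (le_of_lt hKpos)
    apply Finset.sum_nonneg
    intro s hs
    apply Finset.prod_nonneg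
    intro m hm
    apply hrnn
    exact (Finset.mem_powersetCard.mp hs).1 hm

end Stmt10

/-- For `k ≥ 1` and `0 ≤ i ≤ k`, `Q̃_{k,i}(t) ≥ 0` for all real `t`. -/
theorem stmt_10 (k i : ℕ) (hk : 1 ≤ k) (hik : i ≤ k) (t : ℝ) :
    0 ≤ Qtilde k i t := Stmt10.main k i hk hik t
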